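/- Let H be a Hilbert space, A, B, C ∈ L(H), h₁, h₂ > 0, and let τ_{-h} denote the delay (τ_{-h}u)(t) = u(t-h) on H_{ϱ,0}(ℝ; H). If ϱ > 0 satisfies ‖C‖ e^{-h₁ϱ} < 1, then for every f ∈ H_{ϱ,0}(ℝ; H) with ϱ also larger than (‖A‖ + ‖B‖e^{-h₂ϱ})/(1 - ‖C‖e^{-h₁ϱ}), the neutral equation in integrated form u - C τ_{-h₁} u = I(A u + B τ_{-h₂} u + f) (where I is integration from -∞) has a unique solution u ∈ H_{ϱ,0}(ℝ; H). -/

import Mathlib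

open MeasureTheory Real Set

/-- Squared weighted norm integrand total: `∫ ‖f t‖² e^{-2ϱt} dt`. -/
noncomputable def wInt (ϱ : ℝ) {H : Type*} [NormedAddCommGroup H] (f : ℝ → H) : ℝ :=
  ∫ t : ℝ, ‖f t‖ ^ 2 * Real.exp (-2 * ϱ * t)

/-- Membership in the weighted space `H_{ϱ,0}(ℝ; H)`. -/
def memW (ϱ : ℝ) {H : Type*} [NormedAddCommGroup H] (f : ℝ → H) : Prop :=
  AEStronglyMeasurable f volume ∧
    Integrable (fun t : ℝ => ‖f t‖ ^ 2 * Real.exp (-2 * ϱ * t))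

/-- The weighted norm `|f|_{ϱ,0}`. -/
noncomputable def wNorm (ϱ : ℝ) {H : Type*} [NormedAddCommGroup H] (f : ℝ → H) : ℝ :=
  Real.sqrt (wInt ϱ f)

set_option linter.unusedSectionVars false
set_option linter.unusedVariables false
set_option maxHeartbeats 1000000

namespace Stmt18Aux
open ENNReal Filter

noncomputable def w (ϱ : ℝ) : ℝ → ℝ≥0∞ := fun t => ENNReal.ofReal (Real.exp (-2 * ϱ * t))

noncomputable def wm (ϱ : ℝ) : Measure ℝ := (volume : Measure ℝ).withDensity (w ϱ)

lemma w_meas (ϱ : ℝ) : Measurable (w ϱ) :=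
  ENNReal.measurable_ofReal.comp (Real.continuous_exp.comp (by continuity)).measurable

lemma w_pos (ϱ t : ℝ) : 0 < w ϱ t := by
  simp [w, ENNReal.ofReal_pos, Real.exp_pos]

lemma wm_ac (ϱ : ℝ) : wm ϱ ≪ volume := withDensity_absolutelyContinuous _ _

lemma vol_ac (ϱ : ℝ) : (volume : Measure ℝ) ≪ wm ϱ :=
  withDensity_absolutelyContinuous' (w_meas ϱ).aemeasurable
    (Eventually.of_forall fun t => (w_pos ϱ t).ne')

lemma ae_wm {p : ℝ → Prop} {ϱ : ℝ} (h : ∀ᵐ t : ℝ ∂(wm ϱ), p t) : ∀ᵐ t : ℝ, p t :=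
  (vol_ac ϱ).ae_le h

lemma ae_vol {p : ℝ → Prop} {ϱ : ℝ} (h : ∀ᵐ t : ℝ, p t) : ∀ᵐ t : ℝ ∂(wm ϱ), p t :=
  (wm_ac ϱ).ae_le h


variable {H : Type*} [NormedAddCommGroup H]

lemma aesm_wm_iff {ϱ : ℝ} {u : ℝ → H} :
    AEStronglyMeasurable u (wm ϱ) ↔ AEStronglyMeasurable u volume :=
  ⟨fun h => h.mono_ac (vol_ac ϱ), fun h => h.mono_ac (wm_ac ϱ)⟩

noncomputable def Q (ϱ : ℝ) (u : ℝ → H) : ℝ≥0∞ :=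
  ∫⁻ t : ℝ, (‖u t‖₊ : ℝ≥0∞) ^ (2 : ℝ) * w ϱ t

lemma eLpNorm_wm {ϱ : ℝ} {u : ℝ → H} (hu : AEStronglyMeasurable u volume) :
    eLpNorm u 2 (wm ϱ) = Q ϱ u ^ (1/2 : ℝ) := by
  rw [eLpNorm_eq_lintegral_rpow_enorm_toReal two_ne_zero ENNReal.ofNat_ne_top]
  have h2 : ((2:ℝ≥0∞)).toReal = (2:ℝ) := by simp
  rw [h2, wm, lintegral_withDensity_eq_lintegral_mul₀ (w_meas ϱ).aemeasurable
    (hu.enorm.pow_const _)]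
  simp only [Q, Pi.mul_apply, mul_comm, enorm_eq_nnnorm]

lemma integrable_wm_iff {ϱ : ℝ} {u : ℝ → H} :
    Integrable (fun t : ℝ => ‖u t‖ ^ 2 * Real.exp (-2 * ϱ * t)) volume ↔
      Integrable (fun t : ℝ => ‖u t‖ ^ 2) (wm ϱ) := by
  rw [wm, integrable_withDensity_iff (w_meas ϱ)
    (Eventually.of_forall fun t => ENNReal.ofReal_lt_top)]
  have : ∀ t : ℝ, (w ϱ t).toReal = Real.exp (-2 * ϱ * t) := fun t =>
    ENNReal.toReal_ofReal (Real.exp_pos _).le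
  simp only [this]

lemma memW_iff {ϱ : ℝ} {u : ℝ → H} :
    (AEStronglyMeasurable u volume ∧
      Integrable (fun t : ℝ => ‖u t‖ ^ 2 * Real.exp (-2 * ϱ * t))) ↔ MemLp u 2 (wm ϱ) := by
  constructor
  · rintro ⟨hm, hi⟩
    have hm' : AEStronglyMeasurable u (wm ϱ) :=
      hm.mono_ac (withDensity_absolutelyContinuous _ _)
    exact (memLp_two_iff_integrable_sq_norm hm').2 (integrable_wm_iff.1 hi)
  · intro h
    have hm' : AEStronglyMeasurable u volume := aesm_wm_iff.1 h.aestronglyMeasurable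
    exact ⟨hm', integrable_wm_iff.2 ((memLp_two_iff_integrable_sq_norm h.aestronglyMeasurable).1 h)⟩

lemma Q_shift (ϱ h : ℝ) (u : ℝ → H) :
    Q ϱ (fun t => u (t - h)) =
      (ENNReal.ofReal (Real.exp (-h * ϱ)) * ENNReal.ofReal (Real.exp (-h * ϱ))) * Q ϱ u := by
  have e1 : ∫⁻ t : ℝ, (‖u (t - h)‖₊ : ℝ≥0∞) ^ (2:ℝ) * w ϱ t
      = ∫⁻ t : ℝ, (fun s : ℝ => (‖u s‖₊ : ℝ≥0∞) ^ (2:ℝ) * w ϱ (s + h)) (t + (-h)) := by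
    refine lintegral_congr fun t => ?_
    simp only [← sub_eq_add_neg, sub_add_cancel]
  have e2 := lintegral_add_right_eq_self (μ := volume)
    (fun s : ℝ => (‖u s‖₊ : ℝ≥0∞) ^ (2:ℝ) * w ϱ (s + h)) (-h)
  have e3 : ∫⁻ s : ℝ, (‖u s‖₊ : ℝ≥0∞) ^ (2:ℝ) * w ϱ (s + h)
      = ∫⁻ s : ℝ, (ENNReal.ofReal (Real.exp (-h * ϱ)) * ENNReal.ofReal (Real.exp (-h * ϱ))) *
          ((‖u s‖₊ : ℝ≥0∞) ^ (2:ℝ) * w ϱ s) := by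
    refine lintegral_congr fun s => ?_
    have : w ϱ (s + h) = (ENNReal.ofReal (Real.exp (-h * ϱ)) *
        ENNReal.ofReal (Real.exp (-h * ϱ))) * w ϱ s := by
      simp only [w, ← ENNReal.ofReal_mul (Real.exp_pos _).le, ← Real.exp_add]
      congr 1
      ring_nf
    rw [this]; ring
  unfold Q
  rw [e1, e2, e3, lintegral_const_mul' _ _ (by finiteness)]

lemma Q_clm {𝕜 : Type*} [NontriviallyNormedField 𝕜] [NormedSpace 𝕜 H]
    {H₂ : Type*} [NormedAddCommGroup H₂] [NormedSpace 𝕜 H₂]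
    (ϱ : ℝ) (L : H →L[𝕜] H₂) (u : ℝ → H) :
    Q ϱ (fun t => L (u t)) ≤ (ENNReal.ofReal ‖L‖ * ENNReal.ofReal ‖L‖) * Q ϱ u := by
  unfold Q
  rw [← lintegral_const_mul' _ _ (by finiteness)]
  refine lintegral_mono fun t => ?_
  have h1 : (‖L (u t)‖₊ : ℝ≥0∞) ≤ ENNReal.ofReal ‖L‖ * ‖u t‖₊ := by
    rw [← enorm_eq_nnnorm (L (u t)), ← enorm_eq_nnnorm (u t), ← ofReal_norm, ← ofReal_norm,
      ← ENNReal.ofReal_mul (norm_nonneg _)]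
    exact ENNReal.ofReal_le_ofReal (L.le_opNorm _)
  calc (‖L (u t)‖₊ : ℝ≥0∞) ^ (2:ℝ) * w ϱ t
      ≤ (ENNReal.ofReal ‖L‖ * ‖u t‖₊) ^ (2:ℝ) * w ϱ t := by gcongr
    _ = (ENNReal.ofReal ‖L‖ * ENNReal.ofReal ‖L‖) * ((‖u t‖₊ : ℝ≥0∞) ^ (2:ℝ) * w ϱ t) := by
        rw [ENNReal.mul_rpow_of_nonneg _ _ (by norm_num : (0:ℝ) ≤ 2)]
        rw [show ((2:ℝ)) = ((2:ℕ):ℝ) by norm_num, ENNReal.rpow_natCast, ENNReal.rpow_natCast]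
        ring

-- generic eLpNorm comparison from Q comparison
lemma eLp_le_of_Q_le {ϱ c : ℝ} {u : ℝ → H} {v : ℝ → H}
    (h : Q ϱ u ≤ (ENNReal.ofReal c * ENNReal.ofReal c) * Q ϱ v) :
    Q ϱ u ^ (1/2:ℝ) ≤ ENNReal.ofReal c * Q ϱ v ^ (1/2:ℝ) := by
  calc Q ϱ u ^ (1/2:ℝ) ≤ ((ENNReal.ofReal c * ENNReal.ofReal c) * Q ϱ v) ^ (1/2:ℝ) := by
        exact ENNReal.rpow_le_rpow h (by norm_num)
    _ = ENNReal.ofReal c * Q ϱ v ^ (1/2:ℝ) := by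
        have hcc : ENNReal.ofReal c * ENNReal.ofReal c = ENNReal.ofReal c ^ ((2:ℕ):ℝ) := by
          rw [ENNReal.rpow_natCast]; ring
        rw [ENNReal.mul_rpow_of_nonneg _ _ (by norm_num : (0:ℝ) ≤ 1/2), hcc,
          ← ENNReal.rpow_mul]
        norm_num

lemma intOn_exp_neg_Ioi {c : ℝ} (hc : 0 < c) (s : ℝ) :
    IntegrableOn (fun x : ℝ => Real.exp (-(c * x))) (Ioi s) := by
  simpa [neg_mul] using exp_neg_integrableOn_Ioi s hc

lemma integral_exp_neg_Ioi' {c : ℝ} (hc : 0 < c) (s : ℝ) :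
    ∫ x in Ioi s, Real.exp (-(c * x)) = Real.exp (-(c * s)) / c := by
  have := integral_comp_mul_left_Ioi (fun x => Real.exp (-x)) s hc
  simp only [smul_eq_mul] at this
  rw [this, integral_exp_neg_Ioi]
  field_simp

lemma lint_exp_neg_Ioi' {c : ℝ} (hc : 0 < c) (s : ℝ) :
    ∫⁻ t in Ioi s, ENNReal.ofReal (Real.exp (-(c * t))) =
      ENNReal.ofReal (Real.exp (-(c * s)) / c) := by
  rw [← ofReal_integral_eq_lintegral_ofReal (intOn_exp_neg_Ioi hc s)
    (Eventually.of_forall fun t => (Real.exp_pos _).le), integral_exp_neg_Ioi' hc s]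

lemma intOn_exp_Iio {c : ℝ} (hc : 0 < c) (t : ℝ) :
    IntegrableOn (fun x : ℝ => Real.exp (c * x)) (Iio t) := by
  have m : MeasurableEmbedding fun x : ℝ => -x := (Homeomorph.neg ℝ).measurableEmbedding
  have h1 : IntegrableOn (fun x : ℝ => Real.exp (c * x)) (Iic t) := by
    rw [← Measure.map_neg_eq_self (volume : Measure ℝ)]
    rw [m.integrableOn_map_iff]
    have : ((fun x : ℝ => -x) ⁻¹' (Iic t)) = Ici (-t) := by ext x; simp [le_neg]
    rw [this]
    have h2 := (intOn_exp_neg_Ioi hc (-t)).congr_set_ae Ioi_ae_eq_Ici.symm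
    refine h2.congr_fun (fun x _ => ?_) measurableSet_Ici
    show Real.exp (-(c * x)) = Real.exp (c * -x)
    ring_nf
  exact h1.mono_set Iio_subset_Iic_self

lemma integral_exp_Iio {c : ℝ} (hc : 0 < c) (t : ℝ) :
    ∫ s in Iio t, Real.exp (c * s) = Real.exp (c * t) / c := by
  rw [setIntegral_congr_set Iio_ae_eq_Iic]
  have h := integral_comp_neg_Iic t (fun x : ℝ => Real.exp (-(c * x)))
  simp only [mul_neg, neg_neg] at h
  rw [h, integral_exp_neg_Ioi' hc, mul_neg, neg_neg]

lemma lint_exp_Iio {c : ℝ} (hc : 0 < c) (t : ℝ) :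
    ∫⁻ s in Iio t, ENNReal.ofReal (Real.exp (c * s)) =
      ENNReal.ofReal (Real.exp (c * t) / c) := by
  rw [← ofReal_integral_eq_lintegral_ofReal (intOn_exp_Iio hc t)
    (Eventually.of_forall fun t => (Real.exp_pos _).le), integral_exp_Iio hc t]

lemma swap_lemma {F : ℝ → ℝ≥0∞} (hF : Measurable F) {ϱ : ℝ} (hϱ : 0 < ϱ) :
    ∫⁻ t : ℝ, ENNReal.ofReal (Real.exp (-(ϱ * t))) * ∫⁻ s in Iio t, F s =
      ENNReal.ofReal (1/ϱ) * ∫⁻ s : ℝ, ENNReal.ofReal (Real.exp (-(ϱ * s))) * F s := by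
  set K : ℝ × ℝ → ℝ≥0∞ :=
    ({q : ℝ × ℝ | q.2 < q.1}.indicator fun q => F q.2 * ENNReal.ofReal (Real.exp (-(ϱ * q.1))))
    with hK
  have hopen : MeasurableSet {q : ℝ × ℝ | q.2 < q.1} :=
    (isOpen_lt continuous_snd continuous_fst).measurableSet
  have hKm : Measurable K :=
    ((hF.comp measurable_snd).mul
      (ENNReal.measurable_ofReal.comp
        (Real.continuous_exp.comp (by continuity)).measurable)).indicator hopen
  have lhs_eq : ∀ t : ℝ, ENNReal.ofReal (Real.exp (-(ϱ * t))) * ∫⁻ s in Iio t, F s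
      = ∫⁻ s : ℝ, K (t, s) := by
    intro t
    rw [← lintegral_indicator measurableSet_Iio, ← lintegral_const_mul' _ _ ofReal_ne_top]
    refine lintegral_congr fun s => ?_
    by_cases h : s < t <;> simp [hK, Set.indicator, h, mul_comm]
  have rhs_eq : ∀ s : ℝ, ∫⁻ t : ℝ, K (t, s)
      = F s * ENNReal.ofReal (Real.exp (-(ϱ * s)) / ϱ) := by
    intro s
    have : ∀ t : ℝ, K (t, s) = (Ioi s).indicator
        (fun t => ENNReal.ofReal (Real.exp (-(ϱ * t)))) t * F s := by
      intro t
      by_cases h : s < t <;> simp [hK, Set.indicator, h, mem_Ioi, mul_comm]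
    simp only [this]
    have hmeas : Measurable ((Ioi s).indicator fun t : ℝ => ENNReal.ofReal (Real.exp (-(ϱ * t)))) :=
      (ENNReal.measurable_ofReal.comp
        (Real.continuous_exp.comp (by continuity)).measurable).indicator measurableSet_Ioi
    rw [lintegral_mul_const _ hmeas,
      lintegral_indicator measurableSet_Ioi, lint_exp_neg_Ioi' hϱ s, mul_comm]
  calc ∫⁻ t : ℝ, ENNReal.ofReal (Real.exp (-(ϱ * t))) * ∫⁻ s in Iio t, F s
      = ∫⁻ t : ℝ, ∫⁻ s : ℝ, K (t, s) := lintegral_congr lhs_eq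
    _ = ∫⁻ s : ℝ, ∫⁻ t : ℝ, K (t, s) := by
        exact lintegral_lintegral_swap hKm.aemeasurable
    _ = ∫⁻ s : ℝ, F s * ENNReal.ofReal (Real.exp (-(ϱ * s)) / ϱ) := lintegral_congr rhs_eq
    _ = ENNReal.ofReal (1/ϱ) * ∫⁻ s : ℝ, ENNReal.ofReal (Real.exp (-(ϱ * s))) * F s := by
        rw [← lintegral_const_mul' _ _ ofReal_ne_top]
        refine lintegral_congr fun s => ?_
        rw [div_eq_mul_inv, ENNReal.ofReal_mul (Real.exp_pos _).le, one_div]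
        ring


section Ops
variable [NormedSpace ℝ H] [CompleteSpace H]

lemma intOp {ϱ : ℝ} (hϱ : 0 < ϱ) {g : ℝ → H} (hg : MemLp g 2 (wm ϱ)) :
    (∀ t : ℝ, IntegrableOn g (Iio t) volume) ∧
      Continuous (fun t : ℝ => ∫ s in Iio t, g s) ∧
      Q ϱ (fun t : ℝ => ∫ s in Iio t, g s) ≤
        (ENNReal.ofReal (1/ϱ) * ENNReal.ofReal (1/ϱ)) * Q ϱ g := by
  have hgm : AEStronglyMeasurable g volume := aesm_wm_iff.1 hg.aestronglyMeasurable
  set g' : ℝ → H := hgm.mk g with hg'def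
  have hg'sm : StronglyMeasurable g' := hgm.stronglyMeasurable_mk
  have hgg' : g =ᵐ[volume] g' := hgm.ae_eq_mk
  -- Q of g' equals Q of g
  have hQg : Q ϱ g' = Q ϱ g := by
    refine lintegral_congr_ae ?_
    filter_upwards [hgg'] with t ht
    rw [ht]
  -- finiteness of Q g
  have hQfin : Q ϱ g < ⊤ := by
    have := hg.2
    rw [eLpNorm_wm hgm] at this
    by_contra hcon
    push_neg at hcon
    rw [top_le_iff.1 hcon] at this
    simp [ENNReal.top_rpow_of_pos (by norm_num : (0:ℝ) < 1/2)] at this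
  -- the auxiliary kernel
  set F : ℝ → ℝ≥0∞ := fun s => (‖g' s‖₊ : ℝ≥0∞) ^ (2:ℝ) * ENNReal.ofReal (Real.exp (-(ϱ * s)))
    with hFdef
  have hFm : Measurable F :=
    (hg'sm.enorm.pow_const _).mul
      (ENNReal.measurable_ofReal.comp (Real.continuous_exp.comp (by continuity)).measurable)
  -- Step A : partial integrals of F are finite
  have hFbound : ∀ t : ℝ, ∫⁻ s in Iio t, F s ≤ ENNReal.ofReal (Real.exp (ϱ * t)) * Q ϱ g := by
    intro t
    have hptwise : ∀ᵐ s ∂(volume.restrict (Iio t)),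
        F s ≤ ENNReal.ofReal (Real.exp (ϱ * t)) * ((‖g' s‖₊ : ℝ≥0∞) ^ (2:ℝ) * w ϱ s) := by
      filter_upwards [ae_restrict_mem measurableSet_Iio] with s hs
      have : Real.exp (-(ϱ * s)) ≤ Real.exp (ϱ * t) * Real.exp (-2 * ϱ * s) := by
        rw [← Real.exp_add]
        apply Real.exp_le_exp.2
        have : s < t := hs
        nlinarith
      calc F s ≤ (‖g' s‖₊ : ℝ≥0∞) ^ (2:ℝ) *
            (ENNReal.ofReal (Real.exp (ϱ * t)) * ENNReal.ofReal (Real.exp (-2 * ϱ * s))) := by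
            refine mul_le_mul_right ?_ _
            rw [← ENNReal.ofReal_mul (Real.exp_pos _).le]
            exact ENNReal.ofReal_le_ofReal this
        _ = ENNReal.ofReal (Real.exp (ϱ * t)) * ((‖g' s‖₊ : ℝ≥0∞) ^ (2:ℝ) * w ϱ s) := by
            rw [w]; ring
    calc ∫⁻ s in Iio t, F s
        ≤ ∫⁻ s in Iio t, ENNReal.ofReal (Real.exp (ϱ * t)) *
            ((‖g' s‖₊ : ℝ≥0∞) ^ (2:ℝ) * w ϱ s) := lintegral_mono_ae hptwise
      _ ≤ ∫⁻ s : ℝ, ENNReal.ofReal (Real.exp (ϱ * t)) *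
            ((‖g' s‖₊ : ℝ≥0∞) ^ (2:ℝ) * w ϱ s) := setLIntegral_le_lintegral _ _
      _ = ENNReal.ofReal (Real.exp (ϱ * t)) * Q ϱ g := by
          rw [lintegral_const_mul' _ _ ofReal_ne_top, ← hQg]; rfl
  -- Hölder: L¹ bound for ‖g'‖ on Iio t
  have holder : ∀ t : ℝ, ∫⁻ s in Iio t, (‖g' s‖₊ : ℝ≥0∞) ≤
      (∫⁻ s in Iio t, F s) ^ (1/2:ℝ) * (ENNReal.ofReal (Real.exp (ϱ * t) / ϱ)) ^ (1/2:ℝ) := by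
    intro t
    have hconj : Real.HolderConjugate 2 2 := by constructor <;> norm_num
    have hφ : AEMeasurable (fun s : ℝ => (‖g' s‖₊ : ℝ≥0∞) *
        ENNReal.ofReal (Real.exp (-(ϱ * s) / 2))) (volume.restrict (Iio t)) :=
      (hg'sm.enorm.mul (ENNReal.measurable_ofReal.comp
        (Real.continuous_exp.comp (by continuity)).measurable)).aemeasurable
    have hψ : AEMeasurable (fun s : ℝ => ENNReal.ofReal (Real.exp (ϱ * s / 2)))
        (volume.restrict (Iio t)) :=
      (ENNReal.measurable_ofReal.comp
        (Real.continuous_exp.comp (by continuity)).measurable).aemeasurable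
    have key := ENNReal.lintegral_mul_le_Lp_mul_Lq (volume.restrict (Iio t)) hconj hφ hψ
    have hprod : ∀ s : ℝ, ((fun s : ℝ => (‖g' s‖₊ : ℝ≥0∞) *
        ENNReal.ofReal (Real.exp (-(ϱ * s) / 2))) * fun s : ℝ =>
        ENNReal.ofReal (Real.exp (ϱ * s / 2))) s = (‖g' s‖₊ : ℝ≥0∞) := by
      intro s
      simp only [Pi.mul_apply]
      rw [mul_assoc, ← ENNReal.ofReal_mul (Real.exp_pos _).le, ← Real.exp_add]
      have h0 : -(ϱ * s) / 2 + ϱ * s / 2 = 0 := by ring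
      rw [h0, Real.exp_zero, ENNReal.ofReal_one, mul_one]
    have hsq1 : ∀ s : ℝ, ((‖g' s‖₊ : ℝ≥0∞) * ENNReal.ofReal (Real.exp (-(ϱ * s) / 2))) ^ (2:ℝ)
        = F s := by
      intro s
      rw [ENNReal.mul_rpow_of_nonneg _ _ (by norm_num : (0:ℝ) ≤ 2),
        ENNReal.ofReal_rpow_of_pos (Real.exp_pos _), ← Real.exp_mul]
      norm_num [hFdef, neg_div, neg_mul]
    have hsq2 : ∀ s : ℝ, (ENNReal.ofReal (Real.exp (ϱ * s / 2))) ^ (2:ℝ)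
        = ENNReal.ofReal (Real.exp (ϱ * s)) := by
      intro s
      rw [ENNReal.ofReal_rpow_of_pos (Real.exp_pos _), ← Real.exp_mul]
      norm_num
    calc ∫⁻ s in Iio t, (‖g' s‖₊ : ℝ≥0∞)
        = ∫⁻ s in Iio t, ((fun s : ℝ => (‖g' s‖₊ : ℝ≥0∞) *
            ENNReal.ofReal (Real.exp (-(ϱ * s) / 2))) * fun s : ℝ =>
            ENNReal.ofReal (Real.exp (ϱ * s / 2))) s := by
          exact lintegral_congr fun s => (hprod s).symm
      _ ≤ (∫⁻ s in Iio t, ((‖g' s‖₊ : ℝ≥0∞) * ENNReal.ofReal (Real.exp (-(ϱ * s) / 2))) ^ (2:ℝ))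
            ^ (1/(2:ℝ)) *
          (∫⁻ s in Iio t, (ENNReal.ofReal (Real.exp (ϱ * s / 2))) ^ (2:ℝ)) ^ (1/(2:ℝ)) := key
      _ = (∫⁻ s in Iio t, F s) ^ (1/2:ℝ) *
          (ENNReal.ofReal (Real.exp (ϱ * t) / ϱ)) ^ (1/2:ℝ) := by
          congr 1
          · congr 1; exact lintegral_congr fun s => hsq1 s
          · congr 1
            rw [lintegral_congr fun s => hsq2 s]
            exact lint_exp_Iio hϱ t
  -- integrability of g on Iio t
  have hIntOn : ∀ t : ℝ, IntegrableOn g (Iio t) volume := by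
    intro t
    have h1 : IntegrableOn g' (Iio t) volume := by
      constructor
      · exact (hg'sm.aestronglyMeasurable).restrict
      · show (∫⁻ s in Iio t, (‖g' s‖₊ : ℝ≥0∞)) < ⊤
        refine lt_of_le_of_lt (holder t) ?_
        apply ENNReal.mul_lt_top
        · exact ENNReal.rpow_lt_top_of_nonneg (by norm_num)
            (lt_of_le_of_lt (hFbound t) (by finiteness)).ne
        · exact ENNReal.rpow_lt_top_of_nonneg (by norm_num) ofReal_ne_top
    exact h1.congr_fun_ae (ae_restrict_of_ae hgg'.symm)
  have hII : ∀ a b : ℝ, IntervalIntegrable g volume a b := by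
    intro a b
    rw [intervalIntegrable_iff]
    exact (hIntOn (max a b + 1)).mono_set fun x hx => lt_of_le_of_lt hx.2 (lt_add_one _)
  have hGdecomp : (fun t : ℝ => ∫ s in Iio t, g s) =
      fun t => (∫ s in Iio (0:ℝ), g s) + ∫ s in (0:ℝ)..t, g s := by
    have hsplit : ∀ a b : ℝ, a ≤ b →
        ∫ s in Iio b, g s = (∫ s in Iio a, g s) + ∫ s in Ioc a b, g s := by
      intro a b hab
      rw [← setIntegral_congr_set (Ico_ae_eq_Ioc (a := a) (b := b)),
        ← setIntegral_union (by
            rw [Set.disjoint_left]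
            rintro x (hx : x < a) ⟨hx2, -⟩
            exact absurd hx2 (not_le.2 hx))
          measurableSet_Ico
          ((hIntOn b).mono_set (Iio_subset_Iio hab))
          ((hIntOn b).mono_set Ico_subset_Iio_self),
        Iio_union_Ico_eq_Iio hab]
    funext t
    rcases le_total (0:ℝ) t with h|h
    · rw [hsplit 0 t h, intervalIntegral.integral_of_le h]
    · rw [intervalIntegral.integral_of_ge h, hsplit t 0 h]
      abel
  have hGcont : Continuous (fun t : ℝ => ∫ s in Iio t, g s) := by
    rw [hGdecomp]
    exact continuous_const.add (intervalIntegral.continuous_primitive hII 0)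
  refine ⟨hIntOn, hGcont, ?_⟩
  -- pointwise bound on the primitive
  have hGnorm : ∀ t : ℝ, (‖∫ s in Iio t, g s‖₊ : ℝ≥0∞) ≤
      (∫⁻ s in Iio t, F s) ^ (1/2:ℝ) * (ENNReal.ofReal (Real.exp (ϱ * t) / ϱ)) ^ (1/2:ℝ) := by
    intro t
    have h1 : (‖∫ s in Iio t, g s‖₊ : ℝ≥0∞) ≤ ∫⁻ s in Iio t, (‖g s‖₊ : ℝ≥0∞) := by
      rw [← enorm_eq_nnnorm (∫ s in Iio t, g s), ← ofReal_norm]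
      refine le_trans ?_ (le_of_eq (ofReal_integral_norm_eq_lintegral_enorm (hIntOn t)))
      exact ENNReal.ofReal_le_ofReal (norm_integral_le_integral_norm _)
    have h2 : ∫⁻ s in Iio t, (‖g s‖₊ : ℝ≥0∞) = ∫⁻ s in Iio t, (‖g' s‖₊ : ℝ≥0∞) := by
      refine lintegral_congr_ae (ae_restrict_of_ae ?_)
      filter_upwards [hgg'] with s hs
      rw [hs]
    exact le_trans h1 (h2 ▸ holder t)
  have hptQ : ∀ t : ℝ, (‖∫ s in Iio t, g s‖₊ : ℝ≥0∞) ^ (2:ℝ) * w ϱ t ≤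
      ENNReal.ofReal (1/ϱ) * (ENNReal.ofReal (Real.exp (-(ϱ * t))) * ∫⁻ s in Iio t, F s) := by
    intro t
    have hsq : (‖∫ s in Iio t, g s‖₊ : ℝ≥0∞) ^ (2:ℝ) ≤
        (∫⁻ s in Iio t, F s) * ENNReal.ofReal (Real.exp (ϱ * t) / ϱ) := by
      calc (‖∫ s in Iio t, g s‖₊ : ℝ≥0∞) ^ (2:ℝ)
          ≤ ((∫⁻ s in Iio t, F s) ^ (1/2:ℝ) *
              (ENNReal.ofReal (Real.exp (ϱ * t) / ϱ)) ^ (1/2:ℝ)) ^ (2:ℝ) := by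
            gcongr
            exact hGnorm t
        _ = (∫⁻ s in Iio t, F s) * ENNReal.ofReal (Real.exp (ϱ * t) / ϱ) := by
            rw [ENNReal.mul_rpow_of_nonneg _ _ (by norm_num : (0:ℝ) ≤ 2),
              ← ENNReal.rpow_mul, ← ENNReal.rpow_mul]
            norm_num
    calc (‖∫ s in Iio t, g s‖₊ : ℝ≥0∞) ^ (2:ℝ) * w ϱ t
        ≤ ((∫⁻ s in Iio t, F s) * ENNReal.ofReal (Real.exp (ϱ * t) / ϱ)) * w ϱ t := by
          gcongr
      _ = ENNReal.ofReal (1/ϱ) * (ENNReal.ofReal (Real.exp (-(ϱ * t))) * ∫⁻ s in Iio t, F s) := by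
          rw [w]
          rw [mul_assoc, ← ENNReal.ofReal_mul (by positivity :
            (0:ℝ) ≤ Real.exp (ϱ * t) / ϱ)]
          have : Real.exp (ϱ * t) / ϱ * Real.exp (-2 * ϱ * t)
              = 1/ϱ * Real.exp (-(ϱ * t)) := by
            rw [div_mul_eq_mul_div, ← Real.exp_add,
              show ϱ * t + -2 * ϱ * t = -(ϱ * t) by ring, div_eq_mul_inv, mul_comm, one_div]
          rw [this, ENNReal.ofReal_mul (by positivity), mul_comm (∫⁻ s in Iio t, F s)]
          ring
  calc Q ϱ (fun t : ℝ => ∫ s in Iio t, g s)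
      ≤ ∫⁻ t : ℝ, ENNReal.ofReal (1/ϱ) *
          (ENNReal.ofReal (Real.exp (-(ϱ * t))) * ∫⁻ s in Iio t, F s) := lintegral_mono hptQ
    _ = ENNReal.ofReal (1/ϱ) * ∫⁻ t : ℝ,
          ENNReal.ofReal (Real.exp (-(ϱ * t))) * ∫⁻ s in Iio t, F s :=
        lintegral_const_mul' _ _ ofReal_ne_top
    _ = ENNReal.ofReal (1/ϱ) * (ENNReal.ofReal (1/ϱ) *
          ∫⁻ s : ℝ, ENNReal.ofReal (Real.exp (-(ϱ * s))) * F s) := by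
        rw [swap_lemma hFm hϱ]
    _ = (ENNReal.ofReal (1/ϱ) * ENNReal.ofReal (1/ϱ)) * Q ϱ g := by
        rw [mul_assoc]
        congr 1
        congr 1
        rw [← hQg]
        refine lintegral_congr fun s => ?_
        show ENNReal.ofReal (Real.exp (-(ϱ * s))) *
            ((‖g' s‖₊ : ℝ≥0∞) ^ (2:ℝ) * ENNReal.ofReal (Real.exp (-(ϱ * s)))) =
          (‖g' s‖₊ : ℝ≥0∞) ^ (2:ℝ) * ENNReal.ofReal (Real.exp (-2 * ϱ * s))
        rw [← mul_assoc, mul_comm (ENNReal.ofReal (Real.exp (-(ϱ * s)))) _, mul_assoc,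
          ← ENNReal.ofReal_mul (Real.exp_pos _).le, ← Real.exp_add,
          show -(ϱ * s) + -(ϱ * s) = -2 * ϱ * s by ring]

lemma aesm_shift {h : ℝ} {u : ℝ → H} (hm : AEStronglyMeasurable u volume) :
    AEStronglyMeasurable (fun t => u (t - h)) volume := by
  have := hm.comp_measurePreserving (measurePreserving_add_right volume (-h))
  simpa [Function.comp_def, sub_eq_add_neg] using this

lemma memℒp_shift {ϱ h : ℝ} {u : ℝ → H} (hu : MemLp u 2 (wm ϱ)) :
    MemLp (fun t => u (t - h)) 2 (wm ϱ) ∧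
      eLpNorm (fun t => u (t - h)) 2 (wm ϱ) =
        ENNReal.ofReal (Real.exp (-h * ϱ)) * eLpNorm u 2 (wm ϱ) := by
  have hm := aesm_wm_iff.1 hu.aestronglyMeasurable
  have hms : AEStronglyMeasurable (fun t => u (t - h)) volume := aesm_shift hm
  have he : eLpNorm (fun t => u (t - h)) 2 (wm ϱ) =
      ENNReal.ofReal (Real.exp (-h * ϱ)) * eLpNorm u 2 (wm ϱ) := by
    rw [eLpNorm_wm hms, eLpNorm_wm hm, Q_shift]
    rw [ENNReal.mul_rpow_of_nonneg _ _ (by norm_num : (0:ℝ) ≤ 1/2)]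
    congr 1
    rw [show ENNReal.ofReal (Real.exp (-h * ϱ)) * ENNReal.ofReal (Real.exp (-h * ϱ)) =
      ENNReal.ofReal (Real.exp (-h * ϱ)) ^ ((2:ℕ):ℝ) by rw [ENNReal.rpow_natCast]; ring,
      ← ENNReal.rpow_mul]
    norm_num
  refine ⟨⟨aesm_wm_iff.2 hms, ?_⟩, he⟩
  rw [he]
  exact ENNReal.mul_lt_top ofReal_lt_top hu.2

lemma memℒp_clm {𝕜 : Type*} [NontriviallyNormedField 𝕜] [NormedSpace 𝕜 H]
    {ϱ : ℝ} (L : H →L[𝕜] H) {u : ℝ → H} (hu : MemLp u 2 (wm ϱ)) :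
    MemLp (fun t => L (u t)) 2 (wm ϱ) ∧
      eLpNorm (fun t => L (u t)) 2 (wm ϱ) ≤ ENNReal.ofReal ‖L‖ * eLpNorm u 2 (wm ϱ) := by
  have hm := aesm_wm_iff.1 hu.aestronglyMeasurable
  have hms : AEStronglyMeasurable (fun t => L (u t)) volume :=
    L.continuous.comp_aestronglyMeasurable hm
  have he : eLpNorm (fun t => L (u t)) 2 (wm ϱ) ≤ ENNReal.ofReal ‖L‖ * eLpNorm u 2 (wm ϱ) := by
    rw [eLpNorm_wm hms, eLpNorm_wm hm]
    exact eLp_le_of_Q_le (Q_clm ϱ L u)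
  refine ⟨⟨aesm_wm_iff.2 hms, ?_⟩, he⟩
  exact lt_of_le_of_lt he (ENNReal.mul_lt_top ofReal_lt_top hu.2)

lemma memℒp_intop {ϱ : ℝ} (hϱ : 0 < ϱ) {g : ℝ → H} (hg : MemLp g 2 (wm ϱ)) :
    (∀ t : ℝ, IntegrableOn g (Iio t) volume) ∧
      MemLp (fun t : ℝ => ∫ s in Iio t, g s) 2 (wm ϱ) ∧
      eLpNorm (fun t : ℝ => ∫ s in Iio t, g s) 2 (wm ϱ) ≤
        ENNReal.ofReal (1/ϱ) * eLpNorm g 2 (wm ϱ) := by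
  obtain ⟨hint, hcont, hQ⟩ := intOp hϱ hg
  have hm := aesm_wm_iff.1 hg.aestronglyMeasurable
  have hms : AEStronglyMeasurable (fun t : ℝ => ∫ s in Iio t, g s) volume :=
    hcont.aestronglyMeasurable
  have he : eLpNorm (fun t : ℝ => ∫ s in Iio t, g s) 2 (wm ϱ) ≤
      ENNReal.ofReal (1/ϱ) * eLpNorm g 2 (wm ϱ) := by
    rw [eLpNorm_wm hms, eLpNorm_wm hm]
    exact eLp_le_of_Q_le hQ
  exact ⟨hint, ⟨aesm_wm_iff.2 hms,
    lt_of_le_of_lt he (ENNReal.mul_lt_top ofReal_lt_top hg.2)⟩, he⟩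

lemma shift_ae (h : ℝ) {p q : ℝ → H} (hpq : p =ᵐ[volume] q) :
    (fun t => p (t - h)) =ᵐ[volume] fun t => q (t - h) := by
  have := (measurePreserving_add_right (volume : Measure ℝ)
    (-h)).quasiMeasurePreserving.ae_eq_comp hpq
  simpa [Function.comp_def, sub_eq_add_neg] using this

end Ops
end Stmt18Aux

open Stmt18Aux ENNReal Filter

theorem stmt18 {H : Type*} [NormedAddCommGroup H] [InnerProductSpace ℂ H] [CompleteSpace H]
    (A B C : H →L[ℂ] H) (h₁ h₂ ϱ : ℝ) (hh₁ : 0 < h₁) (hh₂ : 0 < h₂) (hϱ : 0 < ϱ)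
    (hC : ‖C‖ * Real.exp (-h₁ * ϱ) < 1)
    (hbig : ‖A‖ + ‖B‖ * Real.exp (-h₂ * ϱ) < ϱ * (1 - ‖C‖ * Real.exp (-h₁ * ϱ)))
    (f : ℝ → H) (hf : memW ϱ f) :
    ∃ u : ℝ → H, memW ϱ u ∧
      (∀ᵐ t : ℝ ∂volume,
        u t - C (u (t - h₁)) = ∫ s in Set.Iio t, (A (u s) + B (u (s - h₂)) + f s)) ∧
      ∀ v : ℝ → H, memW ϱ v →
        (∀ᵐ t : ℝ ∂volume,
          v t - C (v (t - h₁)) = ∫ s in Set.Iio t, (A (v s) + B (v (s - h₂)) + f s)) →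
        v =ᵐ[volume] u := by
  classical
  have hfm : MemLp f 2 (wm ϱ) := memW_iff.1 ⟨hf.1, hf.2⟩
  set k : ℝ := ‖C‖ * Real.exp (-h₁ * ϱ) + (1/ϱ) * (‖A‖ + ‖B‖ * Real.exp (-h₂ * ϱ)) with hk
  have hk0 : 0 ≤ k := by positivity
  have hk1 : k < 1 := by
    have h2 : (1/ϱ) * (‖A‖ + ‖B‖ * Real.exp (-h₂ * ϱ)) <
        (1/ϱ) * (ϱ * (1 - ‖C‖ * Real.exp (-h₁ * ϱ))) :=
      mul_lt_mul_of_pos_left hbig (by positivity)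
    have h3 : (1/ϱ) * (ϱ * (1 - ‖C‖ * Real.exp (-h₁ * ϱ))) =
        1 - ‖C‖ * Real.exp (-h₁ * ϱ) := by field_simp
    rw [hk]; linarith
  set gU : (ℝ → H) → ℝ → H := fun u s => A (u s) + B (u (s - h₂)) + f s with hgU
  set Φ : (ℝ → H) → ℝ → H := fun u t => C (u (t - h₁)) + ∫ s in Set.Iio t, gU u s with hΦ
  have hgU_mem : ∀ {u : ℝ → H}, MemLp u 2 (wm ϱ) → MemLp (gU u) 2 (wm ϱ) := by
    intro u hu
    exact MemLp.add (MemLp.add (memℒp_clm A hu).1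
      (memℒp_clm B (memℒp_shift (h := h₂) hu).1).1) hfm
  have hΦ_mem : ∀ {u : ℝ → H}, MemLp u 2 (wm ϱ) → MemLp (Φ u) 2 (wm ϱ) := by
    intro u hu
    exact MemLp.add (memℒp_clm C (memℒp_shift (h := h₁) hu).1).1
      (memℒp_intop hϱ (hgU_mem hu)).2.1
  -- contraction estimate
  have hconstr : ∀ u v : ℝ → H, MemLp u 2 (wm ϱ) → MemLp v 2 (wm ϱ) →
      eLpNorm (Φ u - Φ v) 2 (wm ϱ) ≤ ENNReal.ofReal k * eLpNorm (u - v) 2 (wm ϱ) := by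
    intro u v hu hv
    set D : ℝ → H := u - v with hD
    have hDmem : MemLp D 2 (wm ϱ) := hu.sub hv
    have hDg_mem : MemLp (fun s => A (D s) + B (D (s - h₂))) 2 (wm ϱ) :=
      MemLp.add (memℒp_clm A hDmem).1 (memℒp_clm B (memℒp_shift (h := h₂) hDmem).1).1
    have keyfun : Φ u - Φ v = (fun t => C (D (t - h₁))) +
        fun t => ∫ s in Set.Iio t, (A (D s) + B (D (s - h₂))) := by
      funext t
      simp only [Pi.sub_apply, Pi.add_apply, hΦ]
      have hsub : (∫ s in Set.Iio t, gU u s) - ∫ s in Set.Iio t, gU v s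
          = ∫ s in Set.Iio t, (A (D s) + B (D (s - h₂))) := by
        rw [← integral_sub ((memℒp_intop hϱ (hgU_mem hu)).1 t)
          ((memℒp_intop hϱ (hgU_mem hv)).1 t)]
        refine setIntegral_congr_fun measurableSet_Iio fun s _ => ?_
        show gU u s - gU v s = A (D s) + B (D (s - h₂))
        simp only [hgU, hD, Pi.sub_apply, map_sub]
        abel
      rw [← hsub]
      have hC' : C (D (t - h₁)) = C (u (t - h₁)) - C (v (t - h₁)) := by
        simp [hD, map_sub]
      rw [hC']
      abel
    rw [keyfun]
    have b1 := (memℒp_clm C (memℒp_shift (h := h₁) hDmem).1).2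
    have b1' : eLpNorm (fun t => C (D (t - h₁))) 2 (wm ϱ) ≤
        ENNReal.ofReal ‖C‖ * (ENNReal.ofReal (Real.exp (-h₁ * ϱ)) *
          eLpNorm D 2 (wm ϱ)) := by
      refine le_trans b1 ?_
      rw [(memℒp_shift (h := h₁) hDmem).2]
    have b2 := (memℒp_intop hϱ hDg_mem).2.2
    have b2inner : eLpNorm (fun s => A (D s) + B (D (s - h₂))) 2 (wm ϱ) ≤
        ENNReal.ofReal ‖A‖ * eLpNorm D 2 (wm ϱ) +
          ENNReal.ofReal ‖B‖ * (ENNReal.ofReal (Real.exp (-h₂ * ϱ)) *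
            eLpNorm D 2 (wm ϱ)) := by
      refine le_trans (eLpNorm_add_le (memℒp_clm A hDmem).1.aestronglyMeasurable
        (memℒp_clm B (memℒp_shift (h := h₂) hDmem).1).1.aestronglyMeasurable one_le_two) ?_
      gcongr
      · exact (memℒp_clm A hDmem).2
      · refine le_trans (memℒp_clm B (memℒp_shift (h := h₂) hDmem).1).2 ?_
        rw [(memℒp_shift (h := h₂) hDmem).2]
    calc eLpNorm ((fun t => C (D (t - h₁))) +
          fun t => ∫ s in Set.Iio t, (A (D s) + B (D (s - h₂)))) 2 (wm ϱ)
        ≤ eLpNorm (fun t => C (D (t - h₁))) 2 (wm ϱ) +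
          eLpNorm (fun t : ℝ => ∫ s in Set.Iio t, (A (D s) + B (D (s - h₂)))) 2 (wm ϱ) :=
          eLpNorm_add_le (memℒp_clm C (memℒp_shift (h := h₁) hDmem).1).1.aestronglyMeasurable
            (memℒp_intop hϱ hDg_mem).2.1.aestronglyMeasurable one_le_two
      _ ≤ ENNReal.ofReal ‖C‖ * (ENNReal.ofReal (Real.exp (-h₁ * ϱ)) * eLpNorm D 2 (wm ϱ)) +
          ENNReal.ofReal (1/ϱ) * (ENNReal.ofReal ‖A‖ * eLpNorm D 2 (wm ϱ) +
            ENNReal.ofReal ‖B‖ * (ENNReal.ofReal (Real.exp (-h₂ * ϱ)) *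
              eLpNorm D 2 (wm ϱ))) := by
          gcongr
          exact le_trans b2 (by gcongr)
      _ = (ENNReal.ofReal ‖C‖ * ENNReal.ofReal (Real.exp (-h₁ * ϱ)) +
            ENNReal.ofReal (1/ϱ) * (ENNReal.ofReal ‖A‖ +
              ENNReal.ofReal ‖B‖ * ENNReal.ofReal (Real.exp (-h₂ * ϱ)))) *
            eLpNorm D 2 (wm ϱ) := by ring
      _ = ENNReal.ofReal k * eLpNorm D 2 (wm ϱ) := by
          congr 1
          rw [← ENNReal.ofReal_mul (norm_nonneg C), ← ENNReal.ofReal_mul (norm_nonneg B),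
            ← ENNReal.ofReal_add (norm_nonneg A) (by positivity),
            ← ENNReal.ofReal_mul (by positivity : (0:ℝ) ≤ 1/ϱ),
            ← ENNReal.ofReal_add (by positivity) (by positivity), hk]
  -- set up the fixed point
  haveI : Fact ((1:ℝ≥0∞) ≤ 2) := ⟨one_le_two⟩
  haveI : Nonempty (Lp H 2 (wm ϱ)) := ⟨0⟩
  set T : Lp H 2 (wm ϱ) → Lp H 2 (wm ϱ) :=
    fun x => MemLp.toLp (Φ ⇑x) (hΦ_mem (Lp.memLp x)) with hT
  have hlip : LipschitzWith k.toNNReal T := by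
    intro x y
    rw [Lp.edist_def, Lp.edist_def]
    have h1 : eLpNorm (⇑(T x) - ⇑(T y)) 2 (wm ϱ) = eLpNorm (Φ ⇑x - Φ ⇑y) 2 (wm ϱ) :=
      eLpNorm_congr_ae ((MemLp.coeFn_toLp _).sub (MemLp.coeFn_toLp _))
    rw [h1]
    have h2 := hconstr ⇑x ⇑y (Lp.memLp x) (Lp.memLp y)
    exact le_trans h2 (le_refl _)
  have hcontr : ContractingWith k.toNNReal T := by
    constructor
    · rw [← NNReal.coe_lt_coe, Real.coe_toNNReal k hk0]
      exact hk1
    · exact hlip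
  set x₀ := ContractingWith.fixedPoint T hcontr with hx₀
  have hfix : T x₀ = x₀ := hcontr.fixedPoint_isFixedPt
  set u : ℝ → H := ⇑x₀ with hu
  have humem : MemLp u 2 (wm ϱ) := Lp.memLp x₀
  have huΦ : u =ᵐ[wm ϱ] Φ u := by
    have h1 : ⇑(T x₀) =ᵐ[wm ϱ] Φ ⇑x₀ := MemLp.coeFn_toLp _
    rw [hfix] at h1
    exact h1
  have hu_vol : ∀ᵐ t : ℝ, u t = Φ u t := ae_wm huΦ
  -- the congruence of Φ under a.e. modification
  have hΦcongr : ∀ p q : ℝ → H, p =ᵐ[volume] q → Φ p =ᵐ[volume] Φ q := by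
    intro p q hpq
    have hsh1 : (fun t => p (t - h₁)) =ᵐ[volume] fun t => q (t - h₁) := shift_ae h₁ hpq
    have hsh2 : (fun t => p (t - h₂)) =ᵐ[volume] fun t => q (t - h₂) := shift_ae h₂ hpq
    have h2 : gU p =ᵐ[volume] gU q := by
      filter_upwards [hpq, hsh2] with s hs1 hs2
      show A (p s) + B (p (s - h₂)) + f s = A (q s) + B (q (s - h₂)) + f s
      have hs2' : p (s - h₂) = q (s - h₂) := hs2
      rw [hs1, hs2']
    have h3 : ∀ t : ℝ, (∫ s in Set.Iio t, gU p s) = ∫ s in Set.Iio t, gU q s := fun t =>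
      integral_congr_ae (ae_restrict_of_ae h2)
    filter_upwards [hsh1] with t ht
    show C (p (t - h₁)) + (∫ s in Set.Iio t, gU p s) =
      C (q (t - h₁)) + ∫ s in Set.Iio t, gU q s
    have ht' : p (t - h₁) = q (t - h₁) := ht
    rw [ht', h3 t]
  refine ⟨u, ⟨(memW_iff.2 humem).1, (memW_iff.2 humem).2⟩, ?_, ?_⟩
  · filter_upwards [hu_vol] with t ht
    have ht' : u t = C (u (t - h₁)) +
        ∫ s in Set.Iio t, (A (u s) + B (u (s - h₂)) + f s) := ht
    rw [ht', add_sub_cancel_left]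
  · intro v hvW hveq
    have hvmem : MemLp v 2 (wm ϱ) := memW_iff.1 ⟨hvW.1, hvW.2⟩
    have hvΦ_vol : v =ᵐ[volume] Φ v := by
      filter_upwards [hveq] with t ht
      show v t = C (v (t - h₁)) + ∫ s in Set.Iio t, gU v s
      have := sub_eq_iff_eq_add.1 ht
      rw [this, add_comm]
    set y := MemLp.toLp v hvmem with hy
    have hy_v : ⇑y =ᵐ[wm ϱ] v := MemLp.coeFn_toLp _
    have hy_v_vol : ⇑y =ᵐ[volume] v := ae_wm hy_v
    have hTy : T y = y := by
      apply Lp.ext (p := (2:ℝ≥0∞)) (μ := wm ϱ)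
      have c1 : ⇑(T y) =ᵐ[wm ϱ] Φ ⇑y := MemLp.coeFn_toLp _
      have c2 : Φ ⇑y =ᵐ[volume] Φ v := hΦcongr _ _ hy_v_vol
      have c2' : Φ ⇑y =ᵐ[wm ϱ] Φ v := ae_vol c2
      have c3' : Φ v =ᵐ[wm ϱ] v := ae_vol hvΦ_vol.symm
      exact c1.trans (c2'.trans (c3'.trans hy_v.symm))
    have hyx : y = x₀ := hcontr.fixedPoint_unique hTy
    refine hy_v_vol.symm.trans ?_
    rw [hyx]
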